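/- Let K, K̂ be symmetric positive semidefinite n×n matrices with K ⪰ K̂, L ⪰ μI with μ > 0, γ ≥ 0, P = K̂ + γ·1_n 1_n^⊤ + L, and A = K + γ·1_n 1_n^⊤ + L. Then the condition number of P^{-1/2} A P^{-1/2} satisfies κ(P^{-1/2} A P^{-1/2}) ≤ 1 + tr(K - K̂)/μ. -/

import Mathlib

open Matrix Pointwise

open scoped ComplexOrder in
/-- The positive semidefinite square root of a positive semidefinite matrix, as defined in the
older Mathlib (`Matrix.PosSemidef.sqrt`, removed since). -/
noncomputable def Matrix.PosSemidef.sqrt {n 𝕜 : Type*} [Fintype n] [RCLike 𝕜] [DecidableEq n]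
    {A : Matrix n n 𝕜} (hA : A.PosSemidef) : Matrix n n 𝕜 :=
  (hA.1.eigenvectorUnitary : Matrix n n 𝕜) * diagonal ((↑) ∘ Real.sqrt ∘ hA.1.eigenvalues) *
    (star hA.1.eigenvectorUnitary : Matrix n n 𝕜)

section Helpers
variable {m : Type*} [Fintype m] [DecidableEq m]

lemma aux_smul_psd {c : ℝ} (hc : 0 ≤ c) {B : Matrix m m ℝ} (hB : B.PosSemidef) :
    (c • B).PosSemidef := by
  refine ⟨?_, fun x => ?_⟩
  · unfold Matrix.IsHermitian
    rw [conjTranspose_smul, hB.1.eq]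
    simp
  · exact (hB.smul hc).2 x

omit [DecidableEq m] in
lemma aux_psd_trace_nonneg {B : Matrix m m ℝ} (hB : B.PosSemidef) : 0 ≤ B.trace := by
  classical
  exact hB.trace_nonneg

lemma aux_trace_eq_sum_eigs {B : Matrix m m ℝ} (hB : B.IsHermitian) :
    B.trace = ∑ i, hB.eigenvalues i := by
  nth_rewrite 1 [hB.spectral_theorem]
  rw [Unitary.conjStarAlgAut_apply, Matrix.trace_mul_cycle, Unitary.coe_star_mul_self, one_mul, Matrix.trace_diagonal]
  simp

omit [DecidableEq m] in
lemma aux_ones_psd :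
    (Matrix.vecMulVec (fun _ => (1:ℝ)) (fun _ => (1:ℝ)) : Matrix m m ℝ).PosSemidef := by
  have h : (Matrix.vecMulVec (fun _ => (1:ℝ)) (fun _ => (1:ℝ)) : Matrix m m ℝ)
      = Matrix.replicateCol Unit (fun _ => (1:ℝ)) * (Matrix.replicateCol Unit (fun _ => (1:ℝ)))ᴴ := by
    ext i j
    simp [Matrix.vecMulVec, Matrix.mul_apply, Matrix.replicateCol]
  rw [h]
  exact Matrix.posSemidef_self_mul_conjTranspose _

lemma aux_smul_one_posdef {μ : ℝ} (hμ : 0 < μ) :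
    (μ • (1 : Matrix m m ℝ)).PosDef := by
  have h : μ • (1 : Matrix m m ℝ) = Matrix.diagonal (fun _ => μ) := by
    ext i j
    simp [Matrix.one_apply, Matrix.diagonal_apply]
  rw [h]
  exact Matrix.posDef_diagonal_iff.mpr fun _ => hμ

lemma aux_sqrt_mul_self {B : Matrix m m ℝ} (hB : B.PosSemidef) :
    Matrix.PosSemidef.sqrt hB * Matrix.PosSemidef.sqrt hB = B := by
  unfold Matrix.PosSemidef.sqrt
  have hU : (star hB.1.eigenvectorUnitary : Matrix m m ℝ) * (hB.1.eigenvectorUnitary : Matrix m m ℝ)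
      = 1 := Unitary.coe_star_mul_self _
  conv_rhs => rw [hB.1.spectral_theorem, Unitary.conjStarAlgAut_apply]
  calc _ = (hB.1.eigenvectorUnitary : Matrix m m ℝ) *
        (diagonal (RCLike.ofReal ∘ Real.sqrt ∘ hB.1.eigenvalues) *
          ((star hB.1.eigenvectorUnitary : Matrix m m ℝ) * (hB.1.eigenvectorUnitary : Matrix m m ℝ))
          * diagonal (RCLike.ofReal ∘ Real.sqrt ∘ hB.1.eigenvalues)) *
        (star hB.1.eigenvectorUnitary : Matrix m m ℝ) := by simp only [Matrix.mul_assoc]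
    _ = _ := by
      rw [hU, Matrix.mul_one, diagonal_mul_diagonal]
      congr 3
      funext i
      simp [Real.mul_self_sqrt (hB.eigenvalues_nonneg i)]

lemma aux_posSemidef_sqrt {B : Matrix m m ℝ} (hB : B.PosSemidef) :
    (Matrix.PosSemidef.sqrt hB).PosSemidef := by
  unfold Matrix.PosSemidef.sqrt
  have hD : (diagonal (RCLike.ofReal ∘ Real.sqrt ∘ hB.1.eigenvalues) : Matrix m m ℝ).PosSemidef :=
    posSemidef_diagonal_iff.mpr fun i => by simp [Real.sqrt_nonneg]
  have := hD.mul_mul_conjTranspose_same (hB.1.eigenvectorUnitary : Matrix m m ℝ)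
  rwa [Matrix.star_eq_conjTranspose]

end Helpers

/-- Condition number bound for the preconditioned matrix: every ratio of
eigenvalues of `P^{-1/2} A P^{-1/2}` is at most `1 + tr(K - K̂)/μ`. -/
theorem stmt_6 {n : ℕ} (K Khat L : Matrix (Fin n) (Fin n) ℝ) (μ γ : ℝ)
    (hμ : 0 < μ) (hγ : 0 ≤ γ)
    (hK : K.PosSemidef) (hKhat : Khat.PosSemidef) (hKKhat : (K - Khat).PosSemidef)
    (hLsym : L.IsHermitian) (hL : (L - μ • (1 : Matrix (Fin n) (Fin n) ℝ)).PosSemidef)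
    (P A : Matrix (Fin n) (Fin n) ℝ)
    (hPdef : P = Khat + γ • Matrix.vecMulVec (fun _ => (1 : ℝ)) (fun _ => (1 : ℝ)) + L)
    (hAdef : A = K + γ • Matrix.vecMulVec (fun _ => (1 : ℝ)) (fun _ => (1 : ℝ)) + L)
    (hP : P.PosSemidef) :
    ∀ a ∈ spectrum ℝ ((Matrix.PosSemidef.sqrt hP)⁻¹ * A * (Matrix.PosSemidef.sqrt hP)⁻¹),
      ∀ b ∈ spectrum ℝ ((Matrix.PosSemidef.sqrt hP)⁻¹ * A * (Matrix.PosSemidef.sqrt hP)⁻¹),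
        a / b ≤ 1 + (K - Khat).trace / μ := by
  classical
  set S := Matrix.PosSemidef.sqrt hP with hSdef
  set D := K - Khat with hDdef
  have hG : (γ • Matrix.vecMulVec (fun _ => (1:ℝ)) (fun _ => (1:ℝ)) :
      Matrix (Fin n) (Fin n) ℝ).PosSemidef := aux_smul_psd hγ aux_ones_psd
  -- P - μ•1 is PSD
  have hPμ : (P - μ • (1 : Matrix (Fin n) (Fin n) ℝ)).PosSemidef := by
    have h : P - μ • (1 : Matrix (Fin n) (Fin n) ℝ)
        = Khat + γ • Matrix.vecMulVec (fun _ => (1:ℝ)) (fun _ => (1:ℝ))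
          + (L - μ • (1 : Matrix (Fin n) (Fin n) ℝ)) := by
      rw [hPdef]; abel
    rw [h]
    exact (hKhat.add hG).add hL
  -- P is positive definite
  have hPpd : P.PosDef := by
    have h : P = (P - μ • (1 : Matrix (Fin n) (Fin n) ℝ))
        + μ • (1 : Matrix (Fin n) (Fin n) ℝ) := by abel
    rw [h]
    exact Matrix.PosDef.posSemidef_add hPμ (aux_smul_one_posdef hμ)
  have hS : S.PosSemidef := aux_posSemidef_sqrt hP
  have hS2 : S * S = P := aux_sqrt_mul_self hP
  have hSdet : IsUnit S.det := by
    have hdet : S.det * S.det = P.det := by rw [← Matrix.det_mul, hS2]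
    have : S.det ≠ 0 := by
      intro h0
      rw [h0, mul_zero] at hdet
      exact absurd hdet.symm hPpd.det_pos.ne'
    exact isUnit_iff_ne_zero.mpr this
  have hSiS : S⁻¹ * S = 1 := Matrix.nonsing_inv_mul _ hSdet
  have hSSi : S * S⁻¹ = 1 := Matrix.mul_nonsing_inv _ hSdet
  have hSinvH : (S⁻¹).IsHermitian := hS.1.inv
  have h1 : S⁻¹ * P * S⁻¹ = 1 := by
    rw [← hS2, ← Matrix.mul_assoc, hSiS, one_mul, hSSi]
  -- A = P + D
  have hA_eq : A = P + D := by rw [hAdef, hPdef, hDdef]; abel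
  set N := S⁻¹ * D * S⁻¹ with hNdef
  have hMN : S⁻¹ * A * S⁻¹ = 1 + N := by
    rw [hA_eq, Matrix.mul_add, Matrix.add_mul, h1, hNdef]
  have hN : N.PosSemidef := by
    have := hKKhat.conjTranspose_mul_mul_same S⁻¹
    rwa [hSinvH.eq] at this
  -- trace bound: N.trace ≤ D.trace / μ
  set R := Matrix.PosSemidef.sqrt hKKhat with hRdef
  have hRps : R.PosSemidef := aux_posSemidef_sqrt hKKhat
  have hR2 : R * R = D := aux_sqrt_mul_self hKKhat
  set Q := S⁻¹ * S⁻¹ with hQdef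
  have htrNQ : N.trace = (R * Q * R).trace := by
    have e : N.trace = (Q * R * R).trace := by
      rw [hNdef, Matrix.trace_mul_cycle, ← hR2, hQdef, ← Matrix.mul_assoc]
    rw [e, Matrix.trace_mul_cycle Q R R]
  have hQpsd : (μ⁻¹ • (1 : Matrix (Fin n) (Fin n) ℝ) - Q).PosSemidef := by
    have e1 : S⁻¹ * (P - μ • (1 : Matrix (Fin n) (Fin n) ℝ)) * S⁻¹
        = 1 - μ • Q := by
      rw [Matrix.mul_sub, Matrix.sub_mul, h1, Matrix.mul_smul, Matrix.mul_one,
        Matrix.smul_mul, hQdef]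
    have e2 : μ⁻¹ • (1 : Matrix (Fin n) (Fin n) ℝ) - Q
        = μ⁻¹ • (S⁻¹ * (P - μ • (1 : Matrix (Fin n) (Fin n) ℝ)) * S⁻¹) := by
      rw [e1, smul_sub, smul_smul, inv_mul_cancel₀ hμ.ne', one_smul]
    rw [e2]
    refine aux_smul_psd (by positivity) ?_
    have := hPμ.conjTranspose_mul_mul_same S⁻¹
    rwa [hSinvH.eq] at this
  have htrace : N.trace ≤ D.trace / μ := by
    have hpsd : (R * (μ⁻¹ • (1 : Matrix (Fin n) (Fin n) ℝ) - Q) * R).PosSemidef := by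
      have := hQpsd.conjTranspose_mul_mul_same R
      rwa [hRps.1.eq] at this
    have h0 := aux_psd_trace_nonneg hpsd
    have hexp : R * (μ⁻¹ • (1 : Matrix (Fin n) (Fin n) ℝ) - Q) * R
        = μ⁻¹ • D - R * Q * R := by
      rw [Matrix.mul_sub, Matrix.sub_mul, Matrix.mul_smul, Matrix.mul_one,
        Matrix.smul_mul, hR2]
    rw [hexp, Matrix.trace_sub, Matrix.trace_smul, sub_nonneg] at h0
    rw [htrNQ, div_eq_inv_mul]
    simpa using h0
  -- spectrum membership
  intro a ha b hb
  rw [hMN] at ha hb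
  have hspec : spectrum ℝ ((1 : Matrix (Fin n) (Fin n) ℝ) + N)
      = ({(1:ℝ)} : Set ℝ) + spectrum ℝ N := by
    have h := spectrum.singleton_add_eq N (1:ℝ)
    rw [_root_.map_one] at h
    exact h.symm
  have key : ∀ c ∈ spectrum ℝ ((1 : Matrix (Fin n) (Fin n) ℝ) + N),
      1 ≤ c ∧ c ≤ 1 + D.trace / μ := by
    intro c hc
    rw [hspec] at hc
    obtain ⟨x, hx, y, hy, hxy⟩ := Set.mem_add.mp hc
    rw [Set.mem_singleton_iff] at hx
    subst hx
    rw [hN.1.spectrum_real_eq_range_eigenvalues] at hy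
    obtain ⟨i, rfl⟩ := hy
    have hnn : 0 ≤ hN.1.eigenvalues i := hN.eigenvalues_nonneg i
    have hle : hN.1.eigenvalues i ≤ N.trace := by
      rw [aux_trace_eq_sum_eigs hN.1]
      exact Finset.single_le_sum (fun j _ => hN.eigenvalues_nonneg j) (Finset.mem_univ i)
    constructor
    · linarith [hxy]
    · linarith [hxy, htrace]
  obtain ⟨ha1, ha2⟩ := key a ha
  obtain ⟨hb1, hb2⟩ := key b hb
  have : a / b ≤ a := div_le_self (by linarith) hb1
  linarith
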